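/- Let G = (V,E) be a finite directed graph on n nodes, let γ: V → ℝ assign a dynamic value to each node, and let P_1,…,P_k be the partition of V into level sets of γ. Let G_i = (V, E_i) where E_i consists of edges of G starting in P_i. Then ν(G) ≤ Σ_{i=1}^k ν(G_i) ≤ n − |S(G)|, where S(G) is the set of sinks of G. Moreover, if γ is constant then Σ_i ν(G_i) = ν(G), and if γ is injective then Σ_i ν(G_i) = n − |S(G)|. -/
import Mathlib


open scoped Classical

/-- A matching of a directed graph: a set of directed edges no two of which
share a common start node or a common end node. -/
def IsDiMatching {n : ℕ} (M : Finset (Fin n × Fin n)) : Prop :=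
  ∀ e ∈ M, ∀ f ∈ M, e ≠ f → e.1 ≠ f.1 ∧ e.2 ≠ f.2

/-- The matching number of a directed graph with edge set `E`. -/
noncomputable def diMatchingNumber {n : ℕ} (E : Finset (Fin n × Fin n)) : ℕ :=
  (E.powerset.filter fun M => IsDiMatching M).sup Finset.card

lemma card_le_nu {n : ℕ} {E M : Finset (Fin n × Fin n)} (h1 : M ⊆ E)
    (h2 : IsDiMatching M) : M.card ≤ diMatchingNumber E :=
  Finset.le_sup (by simp [Finset.mem_filter, Finset.mem_powerset, h1, h2])

lemma nu_le {n : ℕ} {E : Finset (Fin n × Fin n)} {k : ℕ}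
    (h : ∀ M ⊆ E, IsDiMatching M → M.card ≤ k) : diMatchingNumber E ≤ k := by
  apply Finset.sup_le
  intro M hM
  simp only [Finset.mem_filter, Finset.mem_powerset] at hM
  exact h M hM.1 hM.2

lemma exists_max_matching {n : ℕ} (E : Finset (Fin n × Fin n)) :
    ∃ M, M ⊆ E ∧ IsDiMatching M ∧ M.card = diMatchingNumber E := by
  obtain ⟨M, hM, hcard⟩ := Finset.exists_mem_eq_sup
    (E.powerset.filter fun M => IsDiMatching M)
    ⟨∅, by simp [IsDiMatching]⟩ Finset.card
  simp only [Finset.mem_filter, Finset.mem_powerset] at hM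
  exact ⟨M, hM.1, hM.2, hcard.symm⟩

lemma nu_empty {n : ℕ} : diMatchingNumber (∅ : Finset (Fin n × Fin n)) = 0 := by
  refine Nat.le_zero.mp (nu_le fun M hM _ => ?_)
  simp [Finset.subset_empty.mp hM]

theorem stmt13 (n : ℕ) (E : Finset (Fin n × Fin n)) (γ : Fin n → ℝ) :
    let sinks : Finset (Fin n) :=
      Finset.univ.filter fun v : Fin n => ∀ e ∈ E, e.1 ≠ v
    let total : ℕ :=
      ∑ c ∈ Finset.univ.image γ,
        diMatchingNumber (E.filter fun e => γ e.1 = c)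
    diMatchingNumber E ≤ total ∧
    total ≤ n - sinks.card ∧
    ((∀ i j : Fin n, γ i = γ j) → total = diMatchingNumber E) ∧
    (Function.Injective γ → total = n - sinks.card) := by
  intro sinks total
  have hsinks_sub : sinks ⊆ Finset.univ := Finset.filter_subset _ _
  have hnonsink_card :
      (Finset.univ.filter fun v : Fin n => ∃ e ∈ E, e.1 = v).card = n - sinks.card := by
    have h1 : (Finset.univ.filter fun v : Fin n => ∃ e ∈ E, e.1 = v)
        = Finset.univ \ sinks := by
      rw [show sinks = Finset.univ.filter (fun v : Fin n => ∀ e ∈ E, e.1 ≠ v) from rfl,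
        ← Finset.filter_not]
      apply Finset.filter_congr
      intro v _
      push_neg
      rfl
    rw [h1, Finset.card_sdiff_of_subset hsinks_sub, Finset.card_univ, Fintype.card_fin]
  refine ⟨?_, ?_, ?_, ?_⟩
  · -- ν(G) ≤ total
    obtain ⟨M, hME, hMm, hMcard⟩ := exists_max_matching E
    rw [← hMcard]
    have hpart : M.card = ∑ c ∈ Finset.univ.image γ,
        (M.filter fun e => γ e.1 = c).card :=
      Finset.card_eq_sum_card_fiberwise (fun e _ => Finset.mem_image_of_mem γ (Finset.mem_univ e.1))
    rw [hpart]
    apply Finset.sum_le_sum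
    intro c _
    apply card_le_nu
    · exact Finset.filter_subset_filter _ hME
    · intro e he f hf hef
      exact hMm e (Finset.mem_filter.mp he).1 f (Finset.mem_filter.mp hf).1 hef
  · -- total ≤ n - |sinks|
    have hkey : total ≤ ∑ c ∈ Finset.univ.image γ,
        ((Finset.univ.filter fun v : Fin n => ∃ e ∈ E, e.1 = v).filter
          fun v => γ v = c).card := by
      apply Finset.sum_le_sum
      intro c _
      apply nu_le
      intro M hME hMm
      have hinj : Set.InjOn Prod.fst (M : Set (Fin n × Fin n)) := by
        intro e he f hf h
        by_contra hne
        exact (hMm e he f hf hne).1 h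
      calc M.card = (M.image Prod.fst).card := (Finset.card_image_of_injOn hinj).symm
        _ ≤ _ := by
          apply Finset.card_le_card
          intro v hv
          obtain ⟨e, he, rfl⟩ := Finset.mem_image.mp hv
          have heE := hME he
          rw [Finset.mem_filter] at heE
          simp only [Finset.mem_filter, Finset.mem_univ, true_and]
          exact ⟨⟨e, heE.1, rfl⟩, heE.2⟩
    rw [← hnonsink_card]
    refine hkey.trans (le_of_eq ?_)
    exact (Finset.card_eq_sum_card_fiberwise fun v _ =>
      Finset.mem_image_of_mem γ (Finset.mem_univ v)).symm
  · -- constant case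
    intro hconst
    rcases Nat.eq_zero_or_pos n with hn | hn
    · subst hn
      have hE : E = ∅ := Finset.eq_empty_of_isEmpty E
      have himg : (Finset.univ : Finset (Fin 0)).image γ = ∅ := by simp
      simp [total, himg, hE, nu_empty]
    · have v0 : Fin n := ⟨0, hn⟩
      have himg : Finset.univ.image γ = {γ v0} := by
        apply Finset.eq_singleton_iff_unique_mem.mpr
        constructor
        · exact Finset.mem_image_of_mem γ (Finset.mem_univ v0)
        · intro c hc
          obtain ⟨v, _, rfl⟩ := Finset.mem_image.mp hc
          exact hconst v v0
      have hfilt : (E.filter fun e => γ e.1 = γ v0) = E := by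
        apply Finset.filter_true_of_mem
        intro e _
        exact hconst e.1 v0
      simp [total, himg, hfilt]
  · -- injective case
    intro hinj
    have hsum : total = ∑ v : Fin n,
        diMatchingNumber (E.filter fun e => γ e.1 = γ v) :=
      Finset.sum_image fun a _ b _ h => hinj h
    have hterm : ∀ v : Fin n,
        diMatchingNumber (E.filter fun e => γ e.1 = γ v)
          = if ∃ e ∈ E, e.1 = v then 1 else 0 := by
      intro v
      have hfilt : (E.filter fun e => γ e.1 = γ v) = E.filter fun e => e.1 = v := by
        apply Finset.filter_congr
        intro e _
        exact ⟨fun h => hinj h, fun h => by rw [h]⟩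
      rw [hfilt]
      split_ifs with h
      · obtain ⟨e, heE, hev⟩ := h
        apply le_antisymm
        · apply nu_le
          intro M hME hMm
          by_contra hgt
          push_neg at hgt
          obtain ⟨a, ha, b, hb, hab⟩ := Finset.one_lt_card.mp hgt
          have ha1 := (Finset.mem_filter.mp (hME ha)).2
          have hb1 := (Finset.mem_filter.mp (hME hb)).2
          exact (hMm a ha b hb hab).1 (ha1.trans hb1.symm)
        · have h1 : ({e} : Finset (Fin n × Fin n)) ⊆ E.filter fun e => e.1 = v :=
            Finset.singleton_subset_iff.mpr (Finset.mem_filter.mpr ⟨heE, hev⟩)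
          have h2 : IsDiMatching ({e} : Finset (Fin n × Fin n)) := by
            intro a ha b hb hab
            simp only [Finset.mem_singleton] at ha hb
            rw [ha, hb] at hab
            exact absurd rfl hab
          simpa using card_le_nu h1 h2
      · have : (E.filter fun e => e.1 = v) = ∅ := by
          apply Finset.filter_false_of_mem
          intro e heE hev
          exact h ⟨e, heE, hev⟩
        rw [this, nu_empty]
    rw [hsum]
    simp only [hterm]
    rw [← Finset.card_filter, hnonsink_card]
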